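/- Let P and Q be finite connected posets with |P| = n ≥ 1 and |Q| = m ≥ 1. Consider the group ℤ^(P×Q) and the subgroup generated by the exponent vectors of the monomials u_φ = ∏_{p∈P} x_{p,φ(p)} for φ ∈ Hom(P,Q). This subgroup has rank n(m−1) + 1. -/

import Mathlib

/-- The Hasse diagram graph of a poset: edges between pairs where one covers the other. -/
def hasseGraph (α : Type*) [PartialOrder α] : SimpleGraph α :=
  SimpleGraph.fromRel (fun x y => x ⋖ y)

/-- The exponent vector in `ℤ^(P×Q)` of the monomial `u_φ = ∏_{p∈P} x_{p,φ(p)}` attached to an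
isotone map `φ : P → Q`: the indicator of the graph `{(p, φ(p)) : p ∈ P}`. -/
def expVec {P Q : Type*} [PartialOrder P] [PartialOrder Q] [DecidableEq Q]
    (φ : P →o Q) : P × Q → ℤ :=
  fun pq => if φ pq.1 = pq.2 then 1 else 0

section Aux

variable {P Q : Type*} [PartialOrder P] [PartialOrder Q] [DecidableEq P] [DecidableEq Q]

/-- The indicator vector of a single coordinate `(p, q)`. -/
def indVec (p : P) (q : Q) : P × Q → ℤ :=
  fun pq => if pq.1 = p ∧ pq.2 = q then 1 else 0

open Classical in
/-- The isotone map sending `x` to `q'` if `p ≤ x` and to `q` otherwise. -/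
noncomputable def upHom (p : P) {q q' : Q} (h : q ≤ q') : P →o Q :=
  ⟨fun x => if p ≤ x then q' else q, by
    intro a b hab
    by_cases ha : p ≤ a
    · simp [ha, ha.trans hab]
    · by_cases hb : p ≤ b <;> simp [ha, hb, h]⟩

open Classical in
/-- The isotone map sending `x` to `q'` if `p < x` and to `q` otherwise. -/
noncomputable def upHom' (p : P) {q q' : Q} (h : q ≤ q') : P →o Q :=
  ⟨fun x => if p < x then q' else q, by
    intro a b hab
    by_cases ha : p < a
    · simp [ha, ha.trans_le hab]
    · by_cases hb : p < b <;> simp [ha, hb, h]⟩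

open Classical in
lemma expVec_upHom_sub (p : P) {q q' : Q} (h : q ≤ q') :
    expVec (upHom p h) - expVec (upHom' p h) = indVec p q' - indVec p q := by
  funext pq
  obtain ⟨x, y⟩ := pq
  simp only [Pi.sub_apply, expVec, upHom, upHom', indVec]
  erw [OrderHom.coe_mk, OrderHom.coe_mk]
  by_cases hx : x = p
  · subst hx
    simp [le_refl, lt_irrefl, eq_comm]
  · have hle : p ≤ x ↔ p < x := by
      constructor
      · intro hpx
        exact lt_of_le_of_ne hpx (fun he => hx he.symm)
      · exact le_of_lt
    by_cases hpx : p ≤ x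
    · simp [hpx, hle.mp hpx, hx]
    · have hpx' : ¬p < x := fun hlt => hpx (le_of_lt hlt)
      simp [hpx, hpx', hx]

lemma indVec_sub_mem_of_le (p : P) {q q' : Q} (h : q ≤ q') :
    indVec p q' - indVec p q ∈
      Submodule.span ℤ (Set.range (expVec : (P →o Q) → (P × Q → ℤ))) := by
  rw [← expVec_upHom_sub p h]
  exact sub_mem (Submodule.subset_span ⟨_, rfl⟩) (Submodule.subset_span ⟨_, rfl⟩)

lemma indVec_sub_mem (hQ : (hasseGraph Q).Connected) (p : P) (q q' : Q) :
    indVec p q - indVec p q' ∈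
      Submodule.span ℤ (Set.range (expVec : (P →o Q) → (P × Q → ℤ))) := by
  obtain ⟨w⟩ := hQ.preconnected q q'
  induction w with
  | nil => simp
  | @cons a b c hab w ih =>
    have h1 : indVec p a - indVec p b ∈
        Submodule.span ℤ (Set.range (expVec : (P →o Q) → (P × Q → ℤ))) := by
      rw [hasseGraph, SimpleGraph.fromRel_adj] at hab
      rcases hab.2 with hc | hc
      · have := indVec_sub_mem_of_le p hc.le
        have hneg := neg_mem this
        simpa using hneg
      · exact indVec_sub_mem_of_le p hc.le
    have : indVec p a - indVec p c =
        (indVec p a - indVec p b) + (indVec p b - indVec p c) := by ring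
    rw [this]
    exact add_mem h1 ih

end Aux

/-- Let `P` and `Q` be finite connected posets with `|P| = n ≥ 1` and `|Q| = m ≥ 1`. The
subgroup of `ℤ^(P×Q)` generated by the exponent vectors of the monomials `u_φ`,
`φ ∈ Hom(P,Q)`, has rank `n(m−1) + 1`. -/
theorem stmt4 {P Q : Type*} [Fintype P] [Fintype Q] [PartialOrder P] [PartialOrder Q]
    [DecidableEq Q]
    (hP : (hasseGraph P).Connected) (hQ : (hasseGraph Q).Connected)
    (n m : ℕ) (hn : Fintype.card P = n) (hm : Fintype.card Q = m)
    (hn1 : 1 ≤ n) (hm1 : 1 ≤ m) :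
    Module.finrank ℤ
      (Submodule.span ℤ (Set.range (expVec : (P →o Q) → (P × Q → ℤ)))) = n * (m - 1) + 1 := by
  classical
  have hPne : Nonempty P := by
    rw [← Fintype.card_pos_iff]; omega
  have hQne : Nonempty Q := by
    rw [← Fintype.card_pos_iff]; omega
  obtain ⟨x₀⟩ := hPne
  obtain ⟨q₀⟩ := hQne
  set S := Submodule.span ℤ (Set.range (expVec : (P →o Q) → (P × Q → ℤ))) with hS
  -- the candidate basis
  set v : (Unit ⊕ P × {q : Q // q ≠ q₀}) → (P × Q → ℤ) :=
    Sum.elim (fun _ => expVec (OrderHom.const P q₀))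
      (fun x => indVec x.1 (x.2 : Q) - indVec x.1 q₀) with hv
  -- span of v equals S
  have hspan : Submodule.span ℤ (Set.range v) = S := by
    apply le_antisymm
    · rw [Submodule.span_le]
      rintro _ ⟨i, rfl⟩
      rcases i with _ | ⟨p, q, hq⟩
      · exact Submodule.subset_span ⟨_, rfl⟩
      · exact indVec_sub_mem hQ p q q₀
    · rw [Submodule.span_le]
      rintro _ ⟨φ, rfl⟩
      have hkey : expVec φ = v (Sum.inl ()) + ∑ p : P, (indVec p (φ p) - indVec p q₀) := by
        funext pq
        obtain ⟨x, y⟩ := pq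
        have hsum : (∑ p : P, (indVec p (φ p) - indVec p q₀)) (x, y) =
            (indVec x (φ x) - indVec x q₀) (x, y) := by
          rw [Finset.sum_apply]
          refine Finset.sum_eq_single x (fun p _ hp => ?_) (fun hx => absurd (Finset.mem_univ x) hx)
          simp [indVec, Ne.symm hp]
        simp only [Pi.add_apply, hsum, hv, Sum.elim_inl, expVec, OrderHom.const_coe_coe,
          Function.const_apply, indVec, Pi.sub_apply]
        have h1' : (y = φ x) ↔ (φ x = y) := eq_comm
        have h2' : (y = q₀) ↔ (q₀ = y) := eq_comm
        by_cases h1 : φ x = y <;> by_cases h2 : q₀ = y <;>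
          simp [h1, h2, h1', h2']
      rw [hkey]
      refine add_mem (Submodule.subset_span ⟨Sum.inl (), rfl⟩) (Submodule.sum_mem _ ?_)
      intro p _
      by_cases h : φ p = q₀
      · rw [h]
        simp
      · exact Submodule.subset_span ⟨Sum.inr ⟨p, ⟨φ p, h⟩⟩, rfl⟩
  -- linear independence of v
  have hli : LinearIndependent ℤ v := by
    rw [Fintype.linearIndependent_iff]
    intro g hg
    have hinr : ∀ (p : P) (q : {q : Q // q ≠ q₀}), g (Sum.inr (p, q)) = 0 := by
      rintro p ⟨q, hq⟩
      have := congrFun hg (p, q)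
      rw [Finset.sum_apply] at this
      have hsingle : ∀ j ∈ Finset.univ, j ≠ Sum.inr (p, ⟨q, hq⟩) →
          (g j • v j) (p, q) = 0 := by
        rintro j _ hj
        rcases j with _ | ⟨p', q', hq'⟩
        · simp [hv, expVec, Ne.symm hq]
        · have hne : ¬(p = p' ∧ q = q') := by
            intro ⟨h1, h2⟩
            exact hj (by subst h1; subst h2; rfl)
          simp [hv, indVec, hne, hq]
      rw [Finset.sum_eq_single_of_mem _ (Finset.mem_univ _) hsingle] at this
      simpa [hv, indVec, hq] using this
    have hinl : g (Sum.inl ()) = 0 := by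
      have := congrFun hg (x₀, q₀)
      rw [Finset.sum_apply] at this
      have hsingle : ∀ j ∈ Finset.univ, j ≠ Sum.inl () →
          (g j • v j) (x₀, q₀) = 0 := by
        rintro j _ hj
        rcases j with _ | ⟨p', q'⟩
        · exact absurd rfl hj
        · rw [hinr p' q']
          simp
      rw [Finset.sum_eq_single_of_mem _ (Finset.mem_univ _) hsingle] at this
      simpa [hv, expVec] using this
    rintro (_ | ⟨p, q⟩)
    · exact hinl
    · exact hinr p q
  -- conclude via the basis given by v
  have b := Module.Basis.span hli
  rw [← hspan, Module.finrank_eq_card_basis b]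
  have hcard : Fintype.card {q : Q // q ≠ q₀} = m - 1 := by
    have : Fintype.card {q : Q // q ≠ q₀} = Fintype.card Q - Fintype.card {q : Q // q = q₀} := by
      simpa using Fintype.card_subtype_compl (fun q : Q => q = q₀)
    rw [this, Fintype.card_subtype_eq, hm]
  simp [Fintype.card_sum, Fintype.card_prod, hcard, hn]
  omega
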